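/- Let E, F ⊆ ℝ^d be dust-like self-similar sets with contraction vectors ρ = (ρ₁, …, ρ_m) and τ = (τ₁, …, τ_n) respectively, let f : E → F be a bi-Lipschitz bijection, let s be their common Hausdorff dimension, and let n₀ ∈ ℕ be such that every image f(E_w) of a cylinder admits a maximum decomposition with respect to F and n₀. Let E_{i₀} be a stable cylinder for f, i.e. there is c > 0 with H^s(f(E_{i₀ j})) = c · H^s(E_{i₀ j}) for every finite word j. For each finite word i over {1, …, m}, let f(E_{i₀ i}) = ⋃_{r=1}^{p_i} F_{k j_r} be the maximum decomposition of f(E_{i₀ i}). Then the set M = ⋃_i { H^s(E_{i₀ i}) / H^s(F_{k j_r}) : 1 ≤ r ≤ p_i }, taken over all finite words i, is finite; consequently the sets M' = ⋃_i { diam(E_{i₀ i}) / diam(F_{k j_r}) : 1 ≤ r ≤ p_i } and M'' = ⋃_i { ρ_{i₀ i} / τ_{k j_r} : 1 ≤ r ≤ p_i } are finite. -/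

import Mathlib

open Set Metric MeasureTheory

noncomputable section

open scoped ENNReal NNReal
set_option linter.unusedSectionVars false
set_option linter.unusedVariables false
set_option maxHeartbeats 1000000


/-- Two subsets of a metric space are Lipschitz equivalent if there is a
bi-Lipschitz bijection between them. -/
def LipschitzEquivalent {X : Type*} [MetricSpace X] (E F : Set X) : Prop :=
  ∃ (f : X → X) (C : ℝ), 0 < C ∧ Set.BijOn f E F ∧
    ∀ x ∈ E, ∀ y ∈ E,
      C⁻¹ * dist x y ≤ dist (f x) (f y) ∧ dist (f x) (f y) ≤ C * dist x y

/-- `φ` is a similarity with ratio `r`. -/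
def IsSimilarity {X : Type*} [MetricSpace X] (r : ℝ) (φ : X → X) : Prop :=
  ∀ x y, dist (φ x) (φ y) = r * dist x y

/-- `ρ = (ρ₁, …, ρ_m)` is a contraction vector for `ℝ^d`. -/
def IsContractionVector (d m : ℕ) (ρ : Fin m → ℝ) : Prop :=
  (∀ j, ρ j ∈ Set.Ioo (0:ℝ) 1) ∧ ∑ j, ρ j ^ d < 1

/-- `E` is a dust-like self-similar set with contraction vector `ρ`,
i.e. `E ∈ D(ρ)`. -/
def IsDustLike {X : Type*} [MetricSpace X] {m : ℕ} (ρ : Fin m → ℝ) (E : Set X) : Prop :=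
  E.Nonempty ∧ IsCompact E ∧
  ∃ φ : Fin m → X → X,
    (∀ j, IsSimilarity (ρ j) (φ j)) ∧
    E = ⋃ j, φ j '' E ∧
    Pairwise fun j k => Disjoint (φ j '' E) (φ k '' E)
/-- For a finite word `w = i₁⋯i_k`, the composed map `φ_w = φ_{i₁} ∘ ⋯ ∘ φ_{i_k}`
(the identity for the empty word). `wordMap φ w '' E` is the cylinder `E_w`. -/
def wordMap {X : Type*} {m : ℕ} (φ : Fin m → X → X) (w : List (Fin m)) : X → X :=
  w.foldr (fun i g => φ i ∘ g) id
/-- `(k, p, js)` is the maximum decomposition of `A` with respect to the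
IFS `ψ` of `F` and `n₀`: `F_k` is the smallest cylinder of `F` containing `A`,
the words `js r` all have length exactly `n₀`, and `A` is the disjoint union
of the cylinders `F_{k (js r)}`. -/
def IsMaxDecomp {X : Type*} [MetricSpace X] {n : ℕ}
    (ψ : Fin n → X → X) (F : Set X) (n₀ : ℕ) (A : Set X)
    (k : List (Fin n)) (p : ℕ) (js : Fin p → List (Fin n)) : Prop :=
  A ⊆ wordMap ψ k '' F ∧
  (∀ k' : List (Fin n), A ⊆ wordMap ψ k' '' F → wordMap ψ k '' F ⊆ wordMap ψ k' '' F) ∧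
  (∀ r, (js r).length = n₀) ∧
  (Pairwise fun r r' =>
    Disjoint (wordMap ψ (k ++ js r) '' F) (wordMap ψ (k ++ js r') '' F)) ∧
  A = ⋃ r, wordMap ψ (k ++ js r) '' F

namespace SSAux
variable {X : Type*} [MetricSpace X] {m : ℕ}

lemma prod_pos {ρ : Fin m → ℝ} (hρ : ∀ j, ρ j ∈ Set.Ioo (0:ℝ) 1) (w : List (Fin m)) :
    0 < (w.map ρ).prod := by
  induction w with
  | nil => simp
  | cons a t ih => simpa using mul_pos (hρ a).1 ih

lemma prod_le_one {ρ : Fin m → ℝ} (hρ : ∀ j, ρ j ∈ Set.Ioo (0:ℝ) 1) (w : List (Fin m)) :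
    (w.map ρ).prod ≤ 1 := by
  induction w with
  | nil => simp
  | cons a t ih =>
    simp only [List.map_cons, List.prod_cons]
    calc ρ a * (t.map ρ).prod ≤ 1 * 1 :=
          mul_le_mul (hρ a).2.le ih (prod_pos hρ t).le zero_le_one
      _ = 1 := one_mul 1

lemma prod_append {ρ : Fin m → ℝ} (w u : List (Fin m)) :
    ((w ++ u).map ρ).prod = (w.map ρ).prod * (u.map ρ).prod := by
  simp

lemma prod_le_of_prefix {ρ : Fin m → ℝ} (hρ : ∀ j, ρ j ∈ Set.Ioo (0:ℝ) 1)
    {u w : List (Fin m)} (h : u <+: w) : (w.map ρ).prod ≤ (u.map ρ).prod := by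
  obtain ⟨t, rfl⟩ := h
  rw [prod_append]
  nth_rewrite 2 [← mul_one ((u.map ρ).prod)]
  exact mul_le_mul_of_nonneg_left (prod_le_one hρ t) (prod_pos hρ u).le

lemma wordMap_nil (φ : Fin m → X → X) : wordMap φ [] = id := rfl

lemma wordMap_cons (φ : Fin m → X → X) (a : Fin m) (w : List (Fin m)) :
    wordMap φ (a :: w) = φ a ∘ wordMap φ w := rfl

lemma wordMap_append (φ : Fin m → X → X) (w u : List (Fin m)) :
    wordMap φ (w ++ u) = wordMap φ w ∘ wordMap φ u := by
  induction w with
  | nil => rfl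
  | cons a t ih => simp [wordMap_cons, ih, Function.comp_assoc]

lemma isSimilarity_wordMap {ρ : Fin m → ℝ} {φ : Fin m → X → X}
    (hφ : ∀ j, IsSimilarity (ρ j) (φ j)) (w : List (Fin m)) :
    IsSimilarity ((w.map ρ).prod) (wordMap φ w) := by
  induction w with
  | nil => intro x y; simp [wordMap_nil]
  | cons a t ih =>
    intro x y
    simp only [wordMap_cons, Function.comp_apply, List.map_cons, List.prod_cons]
    rw [hφ a, ih x y, mul_assoc]

lemma sim_injective {r : ℝ} {φ : X → X} (h : IsSimilarity r φ) (hr : 0 < r) :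
    Function.Injective φ := by
  intro x y hxy
  have := h x y
  rw [hxy, dist_self] at this
  have : dist x y = 0 := by
    rcases mul_eq_zero.1 this.symm with h' | h'
    · exact absurd h' hr.ne'
    · exact h'
  exact dist_eq_zero.1 this

lemma sim_lipschitz {r : ℝ} {φ : X → X} (h : IsSimilarity r φ) (hr : 0 ≤ r) :
    LipschitzWith r.toNNReal φ := by
  apply LipschitzWith.of_dist_le_mul
  intro x y
  rw [h x y, Real.coe_toNNReal r hr]

lemma sim_antilipschitz {r : ℝ} {φ : X → X} (h : IsSimilarity r φ) (hr : 0 < r) :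
    AntilipschitzWith (r⁻¹).toNNReal φ := by
  apply AntilipschitzWith.of_le_mul_dist
  intro x y
  rw [h x y, Real.coe_toNNReal _ (inv_nonneg.2 hr.le), ← mul_assoc, inv_mul_cancel₀ hr.ne',
    one_mul]

lemma sim_continuous {r : ℝ} {φ : X → X} (h : IsSimilarity r φ) (hr : 0 ≤ r) :
    Continuous φ := (sim_lipschitz h hr).continuous

lemma sim_diam_image {r : ℝ} {φ : X → X} (h : IsSimilarity r φ) (hr : 0 < r)
    {A : Set X} (hA : Bornology.IsBounded A) :
    Metric.diam (φ '' A) = r * Metric.diam A := by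
  apply le_antisymm
  · apply Metric.diam_le_of_forall_dist_le (by positivity)
    rintro x ⟨a, ha, rfl⟩ y ⟨b, hb, rfl⟩
    rw [h a b]
    exact mul_le_mul_of_nonneg_left (Metric.dist_le_diam_of_mem hA ha hb) hr.le
  · rw [mul_comm, ← le_div_iff₀ hr]
    apply Metric.diam_le_of_forall_dist_le (by positivity)
    intro a ha b hb
    rw [le_div_iff₀ hr, mul_comm, ← h a b]
    exact Metric.dist_le_diam_of_mem ((sim_lipschitz h hr.le).isBounded_image hA)
      (Set.mem_image_of_mem _ ha) (Set.mem_image_of_mem _ hb)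


lemma sim_hausdorff_image [MeasurableSpace X] [BorelSpace X]
    {r : ℝ} {φ : X → X} (h : IsSimilarity r φ) (hr : 0 < r) {s : ℝ} (hs : 0 ≤ s) (A : Set X) :
    μH[s] (φ '' A) = ENNReal.ofReal (r ^ s) * μH[s] A := by
  have hcoe : ((r.toNNReal : ℝ≥0∞)) = ENNReal.ofReal r := rfl
  have hcoe' : (((r⁻¹).toNNReal : ℝ≥0∞)) = ENNReal.ofReal r⁻¹ := rfl
  have hup : μH[s] (φ '' A) ≤ ENNReal.ofReal (r ^ s) * μH[s] A := by
    have := (sim_lipschitz h hr.le).hausdorffMeasure_image_le hs A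
    rwa [hcoe, ENNReal.ofReal_rpow_of_pos hr] at this
  have hdown : μH[s] A ≤ ENNReal.ofReal (r⁻¹ ^ s) * μH[s] (φ '' A) := by
    have := (sim_antilipschitz h hr).le_hausdorffMeasure_image hs A
    rwa [hcoe', ENNReal.ofReal_rpow_of_pos (inv_pos.2 hr)] at this
  refine le_antisymm hup ?_
  calc ENNReal.ofReal (r ^ s) * μH[s] A
      ≤ ENNReal.ofReal (r ^ s) * (ENNReal.ofReal (r⁻¹ ^ s) * μH[s] (φ '' A)) :=
        mul_le_mul_right hdown _
    _ = (ENNReal.ofReal (r ^ s) * ENNReal.ofReal (r⁻¹ ^ s)) * μH[s] (φ '' A) := by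
        rw [mul_assoc]
    _ = μH[s] (φ '' A) := by
        rw [← ENNReal.ofReal_mul (Real.rpow_nonneg hr.le s), ← Real.mul_rpow hr.le (inv_nonneg.2 hr.le),
          mul_inv_cancel₀ hr.ne', Real.one_rpow, ENNReal.ofReal_one, one_mul]


lemma cyl_subset {φ : Fin m → X → X} {E : Set X} (hEdef : E = ⋃ j, φ j '' E)
    (w : List (Fin m)) : wordMap φ w '' E ⊆ E := by
  induction w with
  | nil => simp [wordMap]
  | cons a t ih =>
    rw [wordMap_cons, Set.image_comp]
    refine subset_trans (Set.image_mono ih) ?_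
    intro x hx
    rw [hEdef]
    exact Set.mem_iUnion.2 ⟨a, hx⟩

lemma piece_subset {φ : Fin m → X → X} {E : Set X} (hEdef : E = ⋃ j, φ j '' E)
    (j : Fin m) : φ j '' E ⊆ E := by
  intro x hx; rw [hEdef]; exact Set.mem_iUnion.2 ⟨j, hx⟩

lemma exists_gap [Nonempty (Fin m)] {φ : Fin m → X → X} {E : Set X}
    (hcomp : IsCompact E) (hne : E.Nonempty)
    (hφc : ∀ j, Continuous (φ j))
    (hEdisj : Pairwise fun j k => Disjoint (φ j '' E) (φ k '' E)) :
    ∃ δ : ℝ, 0 < δ ∧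
      ∀ j k : Fin m, j ≠ k → ∀ x ∈ φ j '' E, ∀ y ∈ φ k '' E, δ ≤ dist x y := by
  have hpair : ∀ p : Fin m × Fin m, ∃ δ : ℝ, 0 < δ ∧
      (p.1 ≠ p.2 → ∀ x ∈ φ p.1 '' E, ∀ y ∈ φ p.2 '' E, δ ≤ dist x y) := by
    intro p
    by_cases hp : p.1 = p.2
    · exact ⟨1, one_pos, fun h => absurd hp h⟩
    · have K1c : IsCompact (φ p.1 '' E) := hcomp.image (hφc p.1)
      have K2c : IsCompact (φ p.2 '' E) := hcomp.image (hφc p.2)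
      have K1ne : (φ p.1 '' E).Nonempty := hne.image _
      have K2ne : (φ p.2 '' E).Nonempty := hne.image _
      obtain ⟨x₀, hx₀, hmin⟩ := K1c.exists_isMinOn K1ne
        (Metric.continuous_infDist_pt (φ p.2 '' E)).continuousOn
      have hpos : 0 < Metric.infDist x₀ (φ p.2 '' E) := by
        rw [← (K2c.isClosed.notMem_iff_infDist_pos K2ne)]
        intro hmem
        exact (hEdisj hp).le_bot ⟨hx₀, hmem⟩ |>.elim
      refine ⟨_, hpos, fun _ x hx y hy => ?_⟩
      exact le_trans (hmin hx) (Metric.infDist_le_dist_of_mem hy)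
  choose g hg1 hg2 using hpair
  refine ⟨Finset.univ.inf' Finset.univ_nonempty g, ?_, ?_⟩
  · rw [Finset.lt_inf'_iff]; exact fun p _ => hg1 p
  · intro j k hjk x hx y hy
    exact le_trans (Finset.inf'_le g (Finset.mem_univ (j, k))) (hg2 (j, k) hjk x hx y hy)

lemma sep {ρ : Fin m → ℝ} {φ : Fin m → X → X} {E : Set X} {δ : ℝ}
    (hρ : ∀ j, ρ j ∈ Set.Ioo (0:ℝ) 1)
    (hφ : ∀ j, IsSimilarity (ρ j) (φ j))
    (hEdef : E = ⋃ j, φ j '' E)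
    (hδpos : 0 < δ)
    (hδ : ∀ j k : Fin m, j ≠ k → ∀ x ∈ φ j '' E, ∀ y ∈ φ k '' E, δ ≤ dist x y) :
    ∀ w w' : List (Fin m), ¬ w <+: w' → ¬ w' <+: w →
      ∀ x ∈ wordMap φ w '' E, ∀ y ∈ wordMap φ w' '' E,
        δ * ((w.dropLast.map ρ).prod) ≤ dist x y := by
  intro w
  induction w with
  | nil => intro w' h1 _ _ _ _ _; exact absurd (List.nil_prefix) h1
  | cons a t ih =>
    intro w' h1 h2 x hx y hy
    cases w' with
    | nil => exact absurd (List.nil_prefix) h2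
    | cons b t' =>
      by_cases hab : a = b
      · subst hab
        have h1' : ¬ t <+: t' := fun h => h1 (List.cons_prefix_cons.2 ⟨rfl, h⟩)
        have h2' : ¬ t' <+: t := fun h => h2 (List.cons_prefix_cons.2 ⟨rfl, h⟩)
        have ht : t ≠ [] := by rintro rfl; exact h1' (List.nil_prefix)
        rw [wordMap_cons, Set.image_comp] at hx hy
        obtain ⟨x', hx', rfl⟩ := hx
        obtain ⟨y', hy', rfl⟩ := hy
        have hd : (a :: t).dropLast = a :: t.dropLast := by
          cases t with
          | nil => exact absurd rfl ht
          | cons c ts => rfl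
        rw [hd, hφ a x' y']
        calc δ * ((List.map ρ (a :: t.dropLast)).prod)
            = ρ a * (δ * ((t.dropLast.map ρ).prod)) := by
              simp [List.map_cons]; ring
          _ ≤ ρ a * dist x' y' :=
              mul_le_mul_of_nonneg_left (ih t' h1' h2' x' hx' y' hy') (hρ a).1.le
      · have hxe : x ∈ φ a '' E := by
          rw [wordMap_cons, Set.image_comp] at hx
          exact Set.image_mono (cyl_subset hEdef t) hx
        have hye : y ∈ φ b '' E := by
          rw [wordMap_cons, Set.image_comp] at hy
          exact Set.image_mono (cyl_subset hEdef t') hy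
        calc δ * ((List.map ρ (a :: t).dropLast).prod) ≤ δ * 1 := by
              apply mul_le_mul_of_nonneg_left (prod_le_one hρ _) hδpos.le
          _ = δ := mul_one δ
          _ ≤ dist x y := hδ a b hab x hxe y hye

lemma descend {ρ : Fin m → ℝ} {φ : Fin m → X → X} {E : Set X} {δ q : ℝ}
    (hρ : ∀ j, ρ j ∈ Set.Ioo (0:ℝ) 1)
    (hEdef : E = ⋃ j, φ j '' E)
    (hq : ∀ j, ρ j ≤ q) :
    ∀ (k : ℕ) (D : ℝ), 0 < D → D < δ → δ * q ^ k ≤ D → ∀ x ∈ E,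
      ∃ w : List (Fin m), w ≠ [] ∧ x ∈ wordMap φ w '' E ∧
        δ * ((w.map ρ).prod) ≤ D ∧ D < δ * ((w.dropLast.map ρ).prod) := by
  intro k
  induction k with
  | zero =>
    intro D hD hDδ hbase x hx
    simp only [pow_zero, mul_one] at hbase
    exact absurd hbase (not_le.2 hDδ)
  | succ k ih =>
    intro D hD hDδ hbase x hx
    have hx' : x ∈ ⋃ j, φ j '' E := hEdef ▸ hx
    rcases Set.mem_iUnion.1 hx' with ⟨j, hj⟩
    obtain ⟨x', hx'E, rfl⟩ := hj
    have hρj := hρ j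
    by_cases hle : δ * ρ j ≤ D
    · refine ⟨[j], by simp, ?_, by simpa using hle, by simpa using hDδ⟩
      exact ⟨x', hx'E, rfl⟩
    · push_neg at hle
      have hq0 : 0 < q := lt_of_lt_of_le hρj.1 (hq j)
      have h1 : 0 < D / ρ j := div_pos hD hρj.1
      have h2 : D / ρ j < δ := by
        rw [div_lt_iff₀ hρj.1]
        exact hle
      have h3 : δ * q ^ k ≤ D / ρ j := by
        have e1 : δ * q ^ (k+1) = (δ * q ^ k) * q := by ring
        have : (δ * q ^ k) * q ≤ D := e1 ▸ hbase
        have h4 : δ * q ^ k ≤ D / q := (le_div_iff₀ hq0).2 this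
        exact le_trans h4 (div_le_div_of_nonneg_left hD.le hρj.1 (hq j))
      obtain ⟨w', hw'ne, hxw', hwle, hwgt⟩ := ih (D / ρ j) h1 h2 h3 x' hx'E
      refine ⟨j :: w', by simp, ?_, ?_, ?_⟩
      · rw [wordMap_cons, Set.image_comp]
        exact Set.mem_image_of_mem _ hxw'
      · simp only [List.map_cons, List.prod_cons]
        calc δ * (ρ j * (w'.map ρ).prod) = ρ j * (δ * (w'.map ρ).prod) := by ring
          _ ≤ ρ j * (D / ρ j) := mul_le_mul_of_nonneg_left hwle hρj.1.le
          _ = D := by rw [← mul_div_assoc]; exact mul_div_cancel_left₀ D hρj.1.ne'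
      · have hd : (j :: w').dropLast = j :: w'.dropLast := by
          cases w' with
          | nil => exact absurd rfl hw'ne
          | cons c ts => rfl
        rw [hd]
        simp only [List.map_cons, List.prod_cons]
        have := (div_lt_iff₀ hρj.1).1 hwgt
        calc D < δ * (w'.dropLast.map ρ).prod * ρ j := this
          _ = δ * (ρ j * (w'.dropLast.map ρ).prod) := by ring


/-- Any finite family of cylinders covering `E` has `∑ ρ_w ^ s ≥ 1`. -/
lemma antichain_cover {ρ : Fin m → ℝ} {φ : Fin m → X → X} {E : Set X} {s : ℝ}
    (hρ : ∀ j, ρ j ∈ Set.Ioo (0:ℝ) 1)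
    (hφ : ∀ j, IsSimilarity (ρ j) (φ j))
    (hEdef : E = ⋃ j, φ j '' E)
    (hEdisj : Pairwise fun j k => Disjoint (φ j '' E) (φ k '' E))
    (hne : E.Nonempty) (hs : 0 < s) (hρs : ∑ j, ρ j ^ s = 1) :
    ∀ (N : ℕ) (G : Finset (List (Fin m))), (∑ w ∈ G, w.length ≤ N) →
      (E ⊆ ⋃ w ∈ G, wordMap φ w '' E) →
      (1:ℝ) ≤ ∑ w ∈ G, ((w.map ρ).prod) ^ s := by
  classical
  -- Fin m is nonempty
  have hmne : Nonempty (Fin m) := by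
    obtain ⟨x, hx⟩ := hne
    rcases Set.mem_iUnion.1 (hEdef ▸ hx) with ⟨j, _⟩
    exact ⟨j⟩
  haveI := hmne
  haveI : Inhabited (Fin m) := Classical.inhabited_of_nonempty hmne
  have hterm : ∀ (G : Finset (List (Fin m))) (w : List (Fin m)), w ∈ G →
      (0:ℝ) ≤ ((w.map ρ).prod) ^ s := fun _ w _ => Real.rpow_nonneg (prod_pos hρ w).le s
  intro N
  induction N with
  | zero =>
    intro G hlen hcov
    by_cases hnil : [] ∈ G
    · have h1 : (1:ℝ) = ((([] : List (Fin m)).map ρ).prod) ^ s := by simp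
      rw [h1]
      exact Finset.single_le_sum (hterm G) hnil
    · -- all words have length 0 hence are [], so G = ∅, contradicting E nonempty
      exfalso
      obtain ⟨x, hx⟩ := hne
      rcases Set.mem_iUnion₂.1 (hcov hx) with ⟨w, hwG, _⟩
      have : w.length = 0 := by
        have := Finset.single_le_sum (fun (w : List (Fin m)) _ => Nat.zero_le w.length) hwG
        omega
      rw [List.length_eq_zero_iff] at this
      exact hnil (this ▸ hwG)
  | succ N ihN =>
    intro G hlen hcov
    by_cases hnil : [] ∈ G
    · have h1 : (1:ℝ) = ((([] : List (Fin m)).map ρ).prod) ^ s := by simp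
      rw [h1]
      exact Finset.single_le_sum (hterm G) hnil
    · -- fiber over first letter
      set Gf : Fin m → Finset (List (Fin m)) :=
        fun j => G.filter (fun w => w.headI = j) with hGf
      set Gj : Fin m → Finset (List (Fin m)) :=
        fun j => (Gf j).image List.tail with hGj
      have hGne : ∀ w ∈ G, w ≠ [] := fun w hw h => hnil (h ▸ hw)
      have hconsGf : ∀ j, ∀ w ∈ Gf j, w = j :: w.tail := by
        intro j w hw
        rcases Finset.mem_filter.1 hw with ⟨hwG, hhead⟩
        cases w with
        | nil => exact absurd rfl (hGne _ hwG)
        | cons a t => simp only [List.headI] at hhead; subst hhead; rfl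
      have hinj : ∀ j : Fin m, ∀ x ∈ Gf j, ∀ y ∈ Gf j, x.tail = y.tail → x = y := by
        intro j x hx y hy hxy
        rw [hconsGf j x hx, hconsGf j y hy, hxy]
      -- each Gj covers E
      have hcovj : ∀ j : Fin m, E ⊆ ⋃ w ∈ Gj j, wordMap φ w '' E := by
        intro j x hx
        have hjx : φ j x ∈ E := piece_subset hEdef j (Set.mem_image_of_mem _ hx)
        rcases Set.mem_iUnion₂.1 (hcov hjx) with ⟨w, hwG, hmem⟩
        cases w with
        | nil => exact absurd rfl (hGne _ hwG)
        | cons a t =>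
          rw [wordMap_cons, Set.image_comp] at hmem
          obtain ⟨z, hzt, hzeq⟩ := hmem
          have haj : a = j := by
            by_contra hne'
            have h1 : φ j x ∈ φ a '' E := by
              rw [← hzeq]
              exact Set.mem_image_of_mem _ (cyl_subset hEdef t hzt)
            have h2 : φ j x ∈ φ j '' E := Set.mem_image_of_mem _ hx
            exact (hEdisj hne' : Disjoint (φ a '' E) (φ j '' E)).le_bot ⟨h1, h2⟩
          subst haj
          have hz : z = x := sim_injective (hφ a) (hρ a).1 hzeq
          subst hz
          refine Set.mem_iUnion₂.2 ⟨t, ?_, hzt⟩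
          have htG : (a :: t) ∈ Gf a := Finset.mem_filter.2 ⟨hwG, by simp⟩
          exact Finset.mem_image.2 ⟨a :: t, htG, rfl⟩
      -- Gf j is nonempty
      have hGfne : ∀ j : Fin m, (Gf j).Nonempty := by
        intro j
        obtain ⟨x, hx⟩ := hne
        rcases Set.mem_iUnion₂.1 (hcovj j hx) with ⟨w, hwGj, _⟩
        rcases Finset.mem_image.1 hwGj with ⟨w', hw', _⟩
        exact ⟨w', hw'⟩
      -- length bound
      have hlenj : ∀ j : Fin m, ∑ w ∈ Gj j, w.length ≤ N := by
        intro j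
        have e1 : ∑ w ∈ Gj j, w.length = ∑ w ∈ Gf j, w.tail.length :=
          Finset.sum_image (hinj j)
        have e2 : ∑ w ∈ Gf j, (w.tail.length + 1) = ∑ w ∈ Gf j, w.length := by
          refine Finset.sum_congr rfl fun w hw => ?_
          conv_rhs => rw [hconsGf j w hw]
          simp
        have e3 : ∑ w ∈ Gf j, w.length ≤ ∑ w ∈ G, w.length :=
          Finset.sum_le_sum_of_subset (Finset.filter_subset _ _)
        have e4 : ∑ w ∈ Gf j, (w.tail.length + 1)
            = (∑ w ∈ Gf j, w.tail.length) + (Gf j).card := by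
          rw [Finset.sum_add_distrib, Finset.sum_const, smul_eq_mul, mul_one]
        have e5 : 1 ≤ (Gf j).card := Finset.card_pos.2 (hGfne j)
        omega
      -- sum over fibers
      have efib : ∑ w ∈ G, ((w.map ρ).prod) ^ s
          = ∑ j : Fin m, ∑ w ∈ Gf j, ((w.map ρ).prod) ^ s :=
        (Finset.sum_fiberwise_of_maps_to (fun w _ => Finset.mem_univ w.headI) _).symm
      have einner : ∀ j : Fin m,
          ∑ w ∈ Gf j, ((w.map ρ).prod) ^ s
            = ρ j ^ s * ∑ w' ∈ Gj j, ((w'.map ρ).prod) ^ s := by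
        intro j
        rw [hGj, Finset.sum_image (hinj j), Finset.mul_sum]
        refine Finset.sum_congr rfl fun w hw => ?_
        conv_lhs => rw [hconsGf j w hw]
        rw [List.map_cons, List.prod_cons,
          Real.mul_rpow (hρ j).1.le (prod_pos hρ w.tail).le]
      calc (1:ℝ) = ∑ j : Fin m, ρ j ^ s := hρs.symm
        _ ≤ ∑ j : Fin m, ρ j ^ s * ∑ w' ∈ Gj j, ((w'.map ρ).prod) ^ s := by
            refine Finset.sum_le_sum fun j _ => ?_
            nth_rewrite 1 [← mul_one (ρ j ^ s)]
            exact mul_le_mul_of_nonneg_left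
              (ihN (Gj j) (hlenj j) (hcovj j)) (Real.rpow_nonneg (hρ j).1.le s)
        _ = ∑ w ∈ G, ((w.map ρ).prod) ^ s := by
            rw [efib]
            exact Finset.sum_congr rfl fun j _ => (einner j).symm


lemma sum_image_le_real {ι α : Type*} [DecidableEq α] {f : α → ℝ} (hf : ∀ a, 0 ≤ f a)
    (T : Finset ι) (W : ι → α) :
    ∑ w ∈ T.image W, f w ≤ ∑ n ∈ T, f (W n) := by
  classical
  induction T using Finset.induction_on with
  | empty => simp
  | insert a T ha ih =>
    rw [Finset.image_insert, Finset.sum_insert ha]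
    by_cases hmem : W a ∈ T.image W
    · rw [Finset.insert_eq_self.2 hmem]
      calc ∑ w ∈ T.image W, f w ≤ ∑ n ∈ T, f (W n) := ih
        _ ≤ f (W a) + ∑ n ∈ T, f (W n) := le_add_of_nonneg_left (hf _)
    · rw [Finset.sum_insert hmem]
      exact add_le_add_right ih _

/-- Lower bound for the Hausdorff measure of a dust-like self-similar set. -/
theorem hausdorff_pos (d : ℕ) (hd : 1 ≤ d) {m : ℕ} {ρ : Fin m → ℝ}
    {φ : Fin m → EuclideanSpace ℝ (Fin d) → EuclideanSpace ℝ (Fin d)}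
    {E : Set (EuclideanSpace ℝ (Fin d))}
    (hρ : ∀ j, ρ j ∈ Set.Ioo (0:ℝ) 1) (hφ : ∀ j, IsSimilarity (ρ j) (φ j))
    (hne : E.Nonempty) (hcomp : IsCompact E)
    (hEdef : E = ⋃ j, φ j '' E)
    (hEdisj : Pairwise fun j k => Disjoint (φ j '' E) (φ k '' E))
    {s : ℝ} (hs : 0 < s) (hρs : ∑ j, ρ j ^ s = 1) :
    0 < μH[s] E := by
  classical
  haveI hdne : Nonempty (Fin d) := ⟨⟨0, hd⟩⟩
  haveI : Nontrivial (EuclideanSpace ℝ (Fin d)) := by infer_instance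
  have hmne : Nonempty (Fin m) := by
    obtain ⟨x, hx⟩ := hne
    rcases Set.mem_iUnion.1 (hEdef ▸ hx) with ⟨j, _⟩
    exact ⟨j⟩
  haveI := hmne
  -- the gap δ
  obtain ⟨δ, hδpos, hδ⟩ := exists_gap hcomp hne
    (fun j => (sim_lipschitz (hφ j) (hρ j).1.le).continuous) hEdisj
  -- the max contraction ratio q
  set q : ℝ := Finset.univ.sup' Finset.univ_nonempty ρ with hqdef
  have hq : ∀ j, ρ j ≤ q := fun j => Finset.le_sup' ρ (Finset.mem_univ j)
  have hq1 : q < 1 := (Finset.sup'_lt_iff _).2 fun j _ => (hρ j).2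
  have hq0 : 0 < q := lt_of_lt_of_le (hρ (Classical.arbitrary _)).1 (hq _)
  -- geometric sum constant
  set g : ℝ := ((2:ℝ)⁻¹) ^ s with hgdef
  have hg0 : 0 < g := Real.rpow_pos_of_pos (by norm_num) s
  have hg1 : g < 1 := Real.rpow_lt_one (by norm_num) (by norm_num) hs
  set Gsum : ℝ := (1 - g)⁻¹ with hGsumdef
  have hGsum0 : 0 < Gsum := inv_pos.2 (by linarith)
  have hgeom : ∀ T : Finset ℕ, ∑ n ∈ T, g ^ n ≤ Gsum := by
    intro T
    calc ∑ n ∈ T, g ^ n ≤ ∑' n : ℕ, g ^ n :=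
          Summable.sum_le_tsum T (fun i _ => by positivity) (summable_geometric_of_lt_one hg0.le hg1)
      _ = Gsum := tsum_geometric_of_lt_one hg0.le hg1
  -- the dilation constant κ
  set κ : ℝ := (2:ℝ) ^ s⁻¹ - 1 with hκdef
  have hκ0 : 0 < κ := by
    have h2s : (1:ℝ) < (2:ℝ) ^ s⁻¹ :=
      (Real.one_lt_rpow_iff_of_pos (by norm_num)).2 (Or.inl ⟨by norm_num, by positivity⟩)
    rw [hκdef]
    linarith
  have hκs : (1 + κ) ^ s = 2 := by
    rw [hκdef]
    have : (1:ℝ) + ((2:ℝ) ^ s⁻¹ - 1) = (2:ℝ) ^ s⁻¹ := by ring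
    rw [this, Real.rpow_inv_rpow (by norm_num) hs.ne']
  -- the small scale η
  set η' : ℝ := (δ ^ s / (2 * Gsum)) ^ s⁻¹ / 2 with hη'def
  have hη'0 : 0 < η' := by
    apply div_pos _ (by norm_num)
    apply Real.rpow_pos_of_pos
    positivity
  set η : ℝ := min (δ / 8) η' with hηdef
  have hη0 : 0 < η := lt_min (by positivity) hη'0
  have hηbound : (2 * η) ^ s * Gsum ≤ δ ^ s / 2 := by
    have h1 : (2 * η') ^ s = δ ^ s / (2 * Gsum) := by
      rw [hη'def]
      rw [mul_div_cancel₀ _ (two_ne_zero)]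
      exact Real.rpow_inv_rpow (by positivity) hs.ne'
    have h2 : (2 * η) ^ s ≤ (2 * η') ^ s := by
      apply Real.rpow_le_rpow (by positivity) _ hs.le
      have := min_le_right (δ/8) η'
      linarith [this]
    calc (2 * η) ^ s * Gsum ≤ (2 * η') ^ s * Gsum :=
          mul_le_mul_of_nonneg_right h2 hGsum0.le
      _ = δ ^ s / (2 * Gsum) * Gsum := by rw [h1]
      _ = δ ^ s / 2 := by field_simp
  -- scale for coverings
  set r0 : ℝ := δ / (2 * (1 + κ)) with hr0def
  have hr00 : 0 < r0 := by positivity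
  -- Main claim: every countable cover at scale r0 has power-sum at least δ^s/4
  have main : ∀ t : ℕ → Set (EuclideanSpace ℝ (Fin d)),
      E ⊆ ⋃ n, t n → (∀ n, EMetric.diam (t n) ≤ ENNReal.ofReal r0) →
      ENNReal.ofReal (δ ^ s / 4) ≤ ∑' n, ⨆ _ : (t n).Nonempty, EMetric.diam (t n) ^ s := by
    intro t hcov hdiam
    -- real diameters
    set D : ℕ → ℝ := fun n => Metric.diam (t n) with hDdef
    have hD0 : ∀ n, 0 ≤ D n := fun n => Metric.diam_nonneg
    have hDr0 : ∀ n, D n ≤ r0 := fun n =>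
      ENNReal.toReal_le_of_le_ofReal hr00.le (hdiam n)
    have htb : ∀ n, Bornology.IsBounded (t n) := fun n =>
      Metric.isBounded_iff_ediam_ne_top.2 (ne_top_of_le_ne_top ENNReal.ofReal_ne_top (hdiam n))
    -- the enlargements
    set ε : ℕ → ℝ := fun n => if 0 < D n then κ * D n / 2 else η * (2⁻¹:ℝ) ^ n with hεdef
    have hε0 : ∀ n, 0 < ε n := by
      intro n
      simp only [hεdef]
      split_ifs with h
      · positivity
      · positivity
    set u : ℕ → Set (EuclideanSpace ℝ (Fin d)) := fun n => Metric.thickening (ε n) (t n)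
      with hudef
    have huopen : ∀ n, IsOpen (u n) := fun n => Metric.isOpen_thickening
    have hub : ∀ n, Bornology.IsBounded (u n) := fun n => (htb n).thickening
    have hsub : ∀ n, t n ⊆ u n := fun n => Metric.self_subset_thickening (hε0 n) _
    have hdiamu : ∀ n, Metric.diam (u n) ≤ D n + 2 * ε n := fun n =>
      Metric.diam_thickening_le _ (hε0 n).le
    have hulδ : ∀ n, Metric.diam (u n) < δ := by
      intro n
      refine lt_of_le_of_lt (hdiamu n) ?_
      simp only [hεdef]
      split_ifs with h
      · have : D n + 2 * (κ * D n / 2) = D n * (1 + κ) := by ring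
        rw [this]
        calc D n * (1 + κ) ≤ r0 * (1 + κ) :=
              mul_le_mul_of_nonneg_right (hDr0 n) (by positivity)
          _ = δ / 2 := by rw [hr0def]; field_simp
          _ < δ := by linarith
      · push_neg at h
        have hDn : D n = 0 := le_antisymm h (hD0 n)
        have h1 : η * (2⁻¹:ℝ) ^ n ≤ η := by
          nth_rewrite 2 [← mul_one η]
          exact mul_le_mul_of_nonneg_left (pow_le_one₀ (by norm_num) (by norm_num)) hη0.le
        have h2 : η ≤ δ / 8 := min_le_left _ _
        rw [hDn]
        linarith
    -- key per-set bound (selection of a stopping cylinder)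
    have hkey : ∀ n : ℕ, ∃ w : List (Fin m),
        (E ∩ u n).Nonempty →
          (E ∩ u n ⊆ wordMap φ w '' E ∧ δ * ((w.map ρ).prod) ≤ Metric.diam (u n)) := by
      intro n
      by_cases hEun : (E ∩ u n).Nonempty
      swap
      · exact ⟨[], fun h => absurd h hEun⟩
      obtain ⟨x₁, hx₁E, hx₁u⟩ := hEun
      -- u n has positive diameter
      have hupos : 0 < Metric.diam (u n) := by
        obtain ⟨x₂, hx₂t⟩ : (t n).Nonempty := by
          by_contra hemp1
          rw [Set.not_nonempty_iff_eq_empty] at hemp1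
          have : u n = ∅ := by simp only [hudef]; simp [hemp1]
          rw [this] at hx₁u
          exact hx₁u
        obtain ⟨v, hv⟩ := exists_ne (0 : EuclideanSpace ℝ (Fin d))
        set y : EuclideanSpace ℝ (Fin d) := x₂ + ((ε n / 2) * ‖v‖⁻¹) • v with hy
        have hnv : 0 < ‖v‖ := norm_pos_iff.2 hv
        have hdist : dist x₂ y = ε n / 2 := by
          rw [hy, dist_self_add_right, norm_smul]
          simp only [Real.norm_eq_abs]
          rw [abs_of_pos (mul_pos (by linarith [hε0 n]) (inv_pos.2 hnv))]
          field_simp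
        have hx₂u : x₂ ∈ u n := hsub n hx₂t
        have hyu : y ∈ u n := by
          simp only [hudef]
          refine Metric.mem_thickening_iff.2 ⟨x₂, hx₂t, ?_⟩
          rw [dist_comm, hdist]
          linarith [hε0 n]
        calc (0:ℝ) < ε n / 2 := by linarith [hε0 n]
          _ = dist x₂ y := hdist.symm
          _ ≤ Metric.diam (u n) := Metric.dist_le_diam_of_mem (hub n) hx₂u hyu
      set Du := Metric.diam (u n) with hDu
      -- stopping words for every point of E ∩ u n
      have hstop : ∀ x ∈ E, ∃ w : List (Fin m), w ≠ [] ∧ x ∈ wordMap φ w '' E ∧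
          δ * ((w.map ρ).prod) ≤ Du ∧ Du < δ * ((w.dropLast.map ρ).prod) := by
        intro x hx
        obtain ⟨k, hk⟩ := exists_pow_lt_of_lt_one (div_pos hupos hδpos) hq1
        have hbase : δ * q ^ k ≤ Du := by
          have := mul_lt_mul_of_pos_left hk hδpos
          rw [mul_div_cancel₀ _ hδpos.ne'] at this
          exact this.le
        exact descend hρ hEdef hq k Du hupos (hulδ n) hbase x hx
      obtain ⟨w₁, hw₁ne, hx₁w, hw₁le, hw₁gt⟩ := hstop x₁ hx₁E
      -- distinct stopping words are incomparable
      have hincomp : ∀ w₂ : List (Fin m), w₂ ≠ [] →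
          δ * ((w₂.map ρ).prod) ≤ Du → Du < δ * ((w₂.dropLast.map ρ).prod) →
          w₂ ≠ w₁ → (¬ w₂ <+: w₁ ∧ ¬ w₁ <+: w₂) := by
        intro w₂ hw₂ne hle₂ hgt₂ hne₁₂
        constructor
        · intro hpre
          obtain ⟨tl, rfl⟩ := hpre
          have htl : tl ≠ [] := by rintro rfl; simp at hne₁₂
          have hpre' : w₂ <+: (w₂ ++ tl).dropLast := by
            rw [List.dropLast_append_of_ne_nil htl]
            exact List.prefix_append _ _
          have := prod_le_of_prefix hρ hpre'
          have h3 : δ * (((w₂ ++ tl).dropLast.map ρ).prod) ≤ δ * ((w₂.map ρ).prod) :=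
            mul_le_mul_of_nonneg_left this hδpos.le
          linarith
        · intro hpre
          obtain ⟨tl, rfl⟩ := hpre
          have htl : tl ≠ [] := by rintro rfl; simp at hne₁₂
          have hpre' : w₁ <+: (w₁ ++ tl).dropLast := by
            rw [List.dropLast_append_of_ne_nil htl]
            exact List.prefix_append _ _
          have := prod_le_of_prefix hρ hpre'
          have h3 : δ * (((w₁ ++ tl).dropLast.map ρ).prod) ≤ δ * ((w₁.map ρ).prod) :=
            mul_le_mul_of_nonneg_left this hδpos.le
          linarith
      refine ⟨w₁, fun _ => ⟨?_, hw₁le⟩⟩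
      rintro y ⟨hyE, hyu⟩
      obtain ⟨w₂, hw₂ne, hyw, hw₂le, hw₂gt⟩ := hstop y hyE
      by_cases heq : w₂ = w₁
      · exact heq ▸ hyw
      · exfalso
        obtain ⟨h1, h2⟩ := hincomp w₂ hw₂ne hw₂le hw₂gt heq
        have hdist := sep hρ hφ hEdef hδpos hδ w₁ w₂ h2 h1
          x₁ hx₁w y hyw
        have hdd : dist x₁ y ≤ Du := Metric.dist_le_diam_of_mem (hub n) hx₁u hyu
        linarith
    choose W hW using hkey
    -- finite subcover
    have hEcov : E ⊆ ⋃ n, u n := fun x hx => by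
      rcases Set.mem_iUnion.1 (hcov hx) with ⟨n, hn⟩
      exact Set.mem_iUnion.2 ⟨n, hsub n hn⟩
    obtain ⟨S, hS⟩ := hcomp.elim_finite_subcover u huopen hEcov
    set T : Finset ℕ := S.filter (fun n => (E ∩ u n).Nonempty) with hTdef
    -- the selected cylinders cover E
    have hcovG : E ⊆ ⋃ w ∈ T.image W, wordMap φ w '' E := by
      intro x hx
      rcases Set.mem_iUnion₂.1 (hS hx) with ⟨n, hnS, hxu⟩
      have hnT : n ∈ T := Finset.mem_filter.2 ⟨hnS, ⟨x, hx, hxu⟩⟩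
      refine Set.mem_iUnion₂.2 ⟨W n, Finset.mem_image_of_mem W hnT, ?_⟩
      exact (hW n ⟨x, hx, hxu⟩).1 ⟨hx, hxu⟩
    -- antichain bound
    have h1le : (1:ℝ) ≤ ∑ w ∈ T.image W, ((w.map ρ).prod) ^ s :=
      antichain_cover hρ hφ hEdef hEdisj hne hs hρs _ (T.image W) le_rfl hcovG
    have hsum2 : ∑ w ∈ T.image W, ((w.map ρ).prod) ^ s
        ≤ ∑ n ∈ T, (((W n).map ρ).prod) ^ s :=
      sum_image_le_real (fun w => Real.rpow_nonneg (prod_pos hρ w).le s) T W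
    have hterm : ∀ n ∈ T, (((W n).map ρ).prod) ^ s ≤ Metric.diam (u n) ^ s / δ ^ s := by
      intro n hnT
      have hnE : (E ∩ u n).Nonempty := (Finset.mem_filter.1 hnT).2
      have := (hW n hnE).2
      have hprod : ((W n).map ρ).prod ≤ Metric.diam (u n) / δ := by
        rw [le_div_iff₀ hδpos]
        linarith [this]
      calc (((W n).map ρ).prod) ^ s ≤ (Metric.diam (u n) / δ) ^ s :=
            Real.rpow_le_rpow (prod_pos hρ _).le hprod hs.le
        _ = Metric.diam (u n) ^ s / δ ^ s :=
            Real.div_rpow Metric.diam_nonneg hδpos.le s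
    -- diam (u n)^s ≤ 2 D n ^ s + (2η)^s g^n
    have hdusum : ∀ n : ℕ, Metric.diam (u n) ^ s ≤ 2 * D n ^ s + (2*η) ^ s * g ^ n := by
      intro n
      have h0 : Metric.diam (u n) ^ s ≤ (D n + 2 * ε n) ^ s :=
        Real.rpow_le_rpow Metric.diam_nonneg (hdiamu n) hs.le
      refine le_trans h0 ?_
      simp only [hεdef]
      split_ifs with h
      · have e1 : D n + 2 * (κ * D n / 2) = (1 + κ) * D n := by ring
        rw [e1, Real.mul_rpow (by positivity) (hD0 n), hκs]
        have : (0:ℝ) ≤ (2*η) ^ s * g ^ n := by positivity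
        linarith
      · push_neg at h
        have hDn : D n = 0 := le_antisymm h (hD0 n)
        rw [hDn]
        have e1 : (0:ℝ) + 2 * (η * (2⁻¹:ℝ) ^ n) = (2 * η) * (2⁻¹:ℝ) ^ n := by ring
        rw [e1, Real.mul_rpow (by positivity) (by positivity)]
        have e2 : ((2⁻¹:ℝ) ^ n) ^ s = g ^ n := by
          rw [← Real.rpow_natCast ((2:ℝ)⁻¹) n, ← Real.rpow_mul (by norm_num),
            mul_comm, Real.rpow_mul (by norm_num), Real.rpow_natCast]
        rw [e2, Real.zero_rpow hs.ne']
        simp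
    -- put everything together over T
    have hchain : δ ^ s ≤ 2 * (∑ n ∈ T, D n ^ s) + δ ^ s / 2 := by
      have h2 : (1:ℝ) ≤ ∑ n ∈ T, Metric.diam (u n) ^ s / δ ^ s :=
        le_trans h1le (le_trans hsum2 (Finset.sum_le_sum hterm))
      have h3 : δ ^ s ≤ ∑ n ∈ T, Metric.diam (u n) ^ s := by
        have := mul_le_mul_of_nonneg_left h2 (le_of_lt (Real.rpow_pos_of_pos hδpos s))
        rw [mul_one] at this
        refine le_trans this ?_
        rw [Finset.mul_sum]
        refine le_of_eq (Finset.sum_congr rfl fun n _ => ?_)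
        field_simp
      have h4 : ∑ n ∈ T, Metric.diam (u n) ^ s
          ≤ 2 * (∑ n ∈ T, D n ^ s) + (2*η) ^ s * ∑ n ∈ T, g ^ n := by
        calc ∑ n ∈ T, Metric.diam (u n) ^ s
            ≤ ∑ n ∈ T, (2 * D n ^ s + (2*η) ^ s * g ^ n) :=
              Finset.sum_le_sum fun n _ => hdusum n
          _ = 2 * (∑ n ∈ T, D n ^ s) + (2*η) ^ s * ∑ n ∈ T, g ^ n := by
              rw [Finset.sum_add_distrib, Finset.mul_sum, Finset.mul_sum]
      have h5 : (2*η) ^ s * ∑ n ∈ T, g ^ n ≤ δ ^ s / 2 := by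
        calc (2*η) ^ s * ∑ n ∈ T, g ^ n ≤ (2*η) ^ s * Gsum :=
              mul_le_mul_of_nonneg_left (hgeom T) (by positivity)
          _ ≤ δ ^ s / 2 := hηbound
      linarith
    have hfinal : δ ^ s / 4 ≤ ∑ n ∈ T, D n ^ s := by linarith
    -- transfer to ENNReal
    calc ENNReal.ofReal (δ ^ s / 4) ≤ ENNReal.ofReal (∑ n ∈ T, D n ^ s) :=
          ENNReal.ofReal_le_ofReal hfinal
      _ = ∑ n ∈ T, ENNReal.ofReal (D n ^ s) :=
          ENNReal.ofReal_sum_of_nonneg fun n _ => Real.rpow_nonneg (hD0 n) s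
      _ ≤ ∑ n ∈ T, ⨆ _ : (t n).Nonempty, EMetric.diam (t n) ^ s := by
          refine Finset.sum_le_sum fun n hnT => ?_
          have hnE : (E ∩ u n).Nonempty := (Finset.mem_filter.1 hnT).2
          have htne : (t n).Nonempty := by
            by_contra hemp
            rw [Set.not_nonempty_iff_eq_empty] at hemp
            obtain ⟨x, _, hxu⟩ := hnE
            have : u n = ∅ := by simp only [hudef]; simp [hemp]
            rw [this] at hxu
            exact hxu
          have hediam : EMetric.diam (t n) = ENNReal.ofReal (D n) :=
            (ENNReal.ofReal_toReal (ne_top_of_le_ne_top ENNReal.ofReal_ne_top (hdiam n))).symm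
          rw [hediam, ENNReal.ofReal_rpow_of_nonneg (hD0 n) hs.le]
          exact le_iSup_of_le htne le_rfl
      _ ≤ ∑' n, ⨆ _ : (t n).Nonempty, EMetric.diam (t n) ^ s := ENNReal.sum_le_tsum T
  -- conclude
  rw [Measure.hausdorffMeasure_apply]
  have hpos4 : (0:ℝ≥0∞) < ENNReal.ofReal (δ ^ s / 4) := by
    rw [ENNReal.ofReal_pos]
    positivity
  refine lt_of_lt_of_le hpos4 ?_
  refine le_iSup₂_of_le (ENNReal.ofReal r0) (by rwa [ENNReal.ofReal_pos]) ?_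
  refine le_iInf fun t => le_iInf fun hcov => le_iInf fun hdiam => ?_
  exact main t hcov hdiam

lemma cover_level {φ : Fin m → X → X} {E : Set X} (hEdef : E = ⋃ j, φ j '' E) :
    ∀ k : ℕ, E ⊆ ⋃ v : Fin k → Fin m, wordMap φ (List.ofFn v) '' E := by
  intro k
  induction k with
  | zero => intro x hx; exact Set.mem_iUnion.2 ⟨(Fin.elim0), by simpa [wordMap]⟩
  | succ k ih =>
    intro x hx
    rcases Set.mem_iUnion.1 (hEdef ▸ hx) with ⟨j, hj⟩
    obtain ⟨x', hx', rfl⟩ := hj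
    rcases Set.mem_iUnion.1 (ih hx') with ⟨v, hv⟩
    refine Set.mem_iUnion.2 ⟨Fin.cons j v, ?_⟩
    have : List.ofFn (Fin.cons j v : Fin (k+1) → Fin m) = j :: List.ofFn v := by
      rw [List.ofFn_succ]
      simp
    rw [this, wordMap_cons, Set.image_comp]
    exact Set.mem_image_of_mem _ hv

lemma cyl_ediam_le {ρ : Fin m → ℝ} {φ : Fin m → X → X} {E : Set X}
    (hρ : ∀ j, ρ j ∈ Set.Ioo (0:ℝ) 1) (hφ : ∀ j, IsSimilarity (ρ j) (φ j))
    (hEb : Bornology.IsBounded E) (w : List (Fin m)) :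
    EMetric.diam (wordMap φ w '' E) ≤ ENNReal.ofReal (((w.map ρ).prod) * Metric.diam E) := by
  apply EMetric.diam_le
  rintro x ⟨a, ha, rfl⟩ y ⟨b, hb, rfl⟩
  rw [edist_dist, isSimilarity_wordMap hφ w a b]
  exact ENNReal.ofReal_le_ofReal
    (mul_le_mul_of_nonneg_left (Metric.dist_le_diam_of_mem hEb ha hb) (prod_pos hρ w).le)

theorem hausdorff_lt_top [MeasurableSpace X] [BorelSpace X] {ρ : Fin m → ℝ}
    {φ : Fin m → X → X} {E : Set X}
    (hρ : ∀ j, ρ j ∈ Set.Ioo (0:ℝ) 1) (hφ : ∀ j, IsSimilarity (ρ j) (φ j))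
    (hne : E.Nonempty) (hcomp : IsCompact E)
    (hEdef : E = ⋃ j, φ j '' E)
    {s : ℝ} (hs : 0 < s) (hρs : ∑ j, ρ j ^ s = 1) :
    μH[s] E < ⊤ := by
  classical
  have hmne : Nonempty (Fin m) := by
    obtain ⟨x, hx⟩ := hne
    rcases Set.mem_iUnion.1 (hEdef ▸ hx) with ⟨j, _⟩
    exact ⟨j⟩
  haveI := hmne
  set q : ℝ := Finset.univ.sup' Finset.univ_nonempty ρ with hqdef
  have hq : ∀ j, ρ j ≤ q := fun j => Finset.le_sup' ρ (Finset.mem_univ j)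
  have hq1 : q < 1 := (Finset.sup'_lt_iff _).2 fun j _ => (hρ j).2
  have hq0 : 0 ≤ q := le_trans (hρ (Classical.arbitrary _)).1.le (hq _)
  have hEb : Bornology.IsBounded E := hcomp.isBounded
  set DE : ℝ := Metric.diam E with hDE
  have hDE0 : 0 ≤ DE := Metric.diam_nonneg
  -- the covering family
  set t : ∀ k : ℕ, (Fin k → Fin m) → Set X :=
    fun k v => wordMap φ (List.ofFn v) '' E with htdef
  set r : ℕ → ℝ≥0∞ := fun k => ENNReal.ofReal (q ^ k * DE) with hrdef
  have hr0 : Filter.Tendsto r Filter.atTop (nhds 0) := by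
    have h1 : Filter.Tendsto (fun k : ℕ => q ^ k * DE) Filter.atTop (nhds 0) := by
      have := (tendsto_pow_atTop_nhds_zero_of_lt_one hq0 hq1).mul_const DE
      rwa [zero_mul] at this
    have h2 := (ENNReal.continuous_ofReal.tendsto 0).comp h1
    rwa [ENNReal.ofReal_zero] at h2
  have hprodle : ∀ (k : ℕ) (v : Fin k → Fin m), ((List.ofFn v).map ρ).prod ≤ q ^ k := by
    intro k v
    rw [List.map_ofFn, List.prod_ofFn]
    calc ∏ i : Fin k, ρ (v i) ≤ ∏ _i : Fin k, q :=
          Finset.prod_le_prod (fun i _ => (hρ (v i)).1.le) (fun i _ => hq (v i))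
      _ = q ^ k := by rw [Finset.prod_const, Finset.card_univ, Fintype.card_fin]
  have hdiam : ∀ k (v : Fin k → Fin m), EMetric.diam (t k v) ≤ r k := by
    intro k v
    refine le_trans (cyl_ediam_le hρ hφ hEb _) (ENNReal.ofReal_le_ofReal ?_)
    exact mul_le_mul_of_nonneg_right (hprodle k v) hDE0
  have hcov : ∀ k : ℕ, E ⊆ ⋃ v : Fin k → Fin m, t k v := cover_level hEdef
  have hle := MeasureTheory.Measure.hausdorffMeasure_le_liminf_sum s E r hr0 t
    (Filter.Eventually.of_forall hdiam) (Filter.Eventually.of_forall hcov)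
  have hbound : ∀ k : ℕ, ∑ v : Fin k → Fin m, EMetric.diam (t k v) ^ s
      ≤ ENNReal.ofReal (DE ^ s) := by
    intro k
    have h1 : ∀ v : Fin k → Fin m, EMetric.diam (t k v) ^ s
        ≤ ENNReal.ofReal ((((List.ofFn v).map ρ).prod) ^ s) * ENNReal.ofReal (DE ^ s) := by
      intro v
      calc EMetric.diam (t k v) ^ s
          ≤ (ENNReal.ofReal ((((List.ofFn v).map ρ).prod) * DE)) ^ s :=
            ENNReal.rpow_le_rpow (cyl_ediam_le hρ hφ hEb _) hs.le
        _ = ENNReal.ofReal (((((List.ofFn v).map ρ).prod) * DE) ^ s) :=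
            ENNReal.ofReal_rpow_of_nonneg (mul_nonneg (prod_pos hρ _).le hDE0) hs.le
        _ = ENNReal.ofReal ((((List.ofFn v).map ρ).prod) ^ s * DE ^ s) := by
            rw [Real.mul_rpow (prod_pos hρ _).le hDE0]
        _ = ENNReal.ofReal ((((List.ofFn v).map ρ).prod) ^ s) * ENNReal.ofReal (DE ^ s) :=
            ENNReal.ofReal_mul (Real.rpow_nonneg (prod_pos hρ _).le s)
    calc ∑ v : Fin k → Fin m, EMetric.diam (t k v) ^ s
        ≤ ∑ v : Fin k → Fin m,
            ENNReal.ofReal ((((List.ofFn v).map ρ).prod) ^ s) * ENNReal.ofReal (DE ^ s) :=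
          Finset.sum_le_sum fun v _ => h1 v
      _ = (∑ v : Fin k → Fin m, ENNReal.ofReal ((((List.ofFn v).map ρ).prod) ^ s))
            * ENNReal.ofReal (DE ^ s) := by rw [Finset.sum_mul]
      _ = ENNReal.ofReal (DE ^ s) := by
          have e1 : ∑ v : Fin k → Fin m, ENNReal.ofReal ((((List.ofFn v).map ρ).prod) ^ s)
              = ENNReal.ofReal (∑ v : Fin k → Fin m, (((List.ofFn v).map ρ).prod) ^ s) :=
            (ENNReal.ofReal_sum_of_nonneg fun v _ => Real.rpow_nonneg (prod_pos hρ _).le s).symm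
          have e2 : ∑ v : Fin k → Fin m, (((List.ofFn v).map ρ).prod) ^ s = 1 := by
            have e3 : ∀ v : Fin k → Fin m,
                (((List.ofFn v).map ρ).prod) ^ s = ∏ i : Fin k, ρ (v i) ^ s := by
              intro v
              rw [List.map_ofFn, List.prod_ofFn]
              exact (Real.finset_prod_rpow Finset.univ _ (fun i _ => (hρ (v i)).1.le) s).symm
            calc ∑ v : Fin k → Fin m, (((List.ofFn v).map ρ).prod) ^ s
                = ∑ v : Fin k → Fin m, ∏ i : Fin k, ρ (v i) ^ s :=
                  Finset.sum_congr rfl fun v _ => e3 v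
              _ = ∏ _i : Fin k, ∑ j : Fin m, ρ j ^ s := by
                  rw [Finset.prod_univ_sum]
                  rw [Fintype.piFinset_univ]
              _ = 1 := by rw [hρs]; simp
          rw [e1, e2, ENNReal.ofReal_one, one_mul]
  have hliminf : Filter.liminf
      (fun k => ∑ v : Fin k → Fin m, EMetric.diam (t k v) ^ s) Filter.atTop
      ≤ ENNReal.ofReal (DE ^ s) := by
    refine le_trans (Filter.liminf_le_liminf (Filter.Eventually.of_forall hbound)) ?_
    rw [Filter.liminf_const]
  exact lt_of_le_of_lt (le_trans hle hliminf) ENNReal.ofReal_lt_top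

lemma two_le_card {ρ : Fin m → ℝ} (hρ : ∀ j, ρ j ∈ Set.Ioo (0:ℝ) 1)
    {s : ℝ} (hs : 0 < s) (hρs : ∑ j, ρ j ^ s = 1) : 2 ≤ m := by
  by_contra h
  push_neg at h
  interval_cases m
  · simp at hρs
  · rw [Fin.sum_univ_one] at hρs
    have := Real.rpow_lt_one (hρ 0).1.le (hρ 0).2 hs
    rw [hρs] at this
    exact lt_irrefl _ this

lemma diam_pos {ρ : Fin m → ℝ} {φ : Fin m → X → X} {E : Set X}
    (hρ : ∀ j, ρ j ∈ Set.Ioo (0:ℝ) 1)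
    (hne : E.Nonempty) (hcomp : IsCompact E)
    (hEdef : E = ⋃ j, φ j '' E)
    (hEdisj : Pairwise fun j k => Disjoint (φ j '' E) (φ k '' E))
    {s : ℝ} (hs : 0 < s) (hρs : ∑ j, ρ j ^ s = 1) :
    0 < Metric.diam E := by
  have hm := two_le_card hρ hs hρs
  have hj0 : (0 : ℕ) < m := by omega
  have hj1 : (1 : ℕ) < m := by omega
  set j0 : Fin m := ⟨0, hj0⟩
  set j1 : Fin m := ⟨1, hj1⟩
  have hne01 : j0 ≠ j1 := by simp [j0, j1, Fin.ext_iff]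
  obtain ⟨z, hz⟩ := hne
  have hx : φ j0 z ∈ E := piece_subset hEdef j0 (Set.mem_image_of_mem _ hz)
  have hy : φ j1 z ∈ E := piece_subset hEdef j1 (Set.mem_image_of_mem _ hz)
  have hxy : φ j0 z ≠ φ j1 z := by
    intro heq
    have h1 : φ j0 z ∈ φ j0 '' E := Set.mem_image_of_mem _ hz
    have h2 : φ j0 z ∈ φ j1 '' E := heq ▸ Set.mem_image_of_mem _ hz
    exact (hEdisj hne01).le_bot ⟨h1, h2⟩
  calc (0:ℝ) < dist (φ j0 z) (φ j1 z) := dist_pos.2 hxy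
    _ ≤ Metric.diam E := Metric.dist_le_diam_of_mem hcomp.isBounded hx hy

end SSAux

open SSAux in
theorem ratio_sets_M_M'_M''_finite
    (d m n : ℕ) (hd : 1 ≤ d)
    (ρ : Fin m → ℝ) (τ : Fin n → ℝ)
    (hρ : IsContractionVector d m ρ) (hτ : IsContractionVector d n τ)
    (E F : Set (EuclideanSpace ℝ (Fin d)))
    (hEne : E.Nonempty) (hEcomp : IsCompact E)
    (φ : Fin m → EuclideanSpace ℝ (Fin d) → EuclideanSpace ℝ (Fin d))
    (hφ : ∀ j, IsSimilarity (ρ j) (φ j))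
    (hEdef : E = ⋃ j, φ j '' E)
    (hEdisj : Pairwise fun j k => Disjoint (φ j '' E) (φ k '' E))
    (hFne : F.Nonempty) (hFcomp : IsCompact F)
    (ψ : Fin n → EuclideanSpace ℝ (Fin d) → EuclideanSpace ℝ (Fin d))
    (hψ : ∀ j, IsSimilarity (τ j) (ψ j))
    (hFdef : F = ⋃ j, ψ j '' F)
    (hFdisj : Pairwise fun j k => Disjoint (ψ j '' F) (ψ k '' F))
    (f : EuclideanSpace ℝ (Fin d) → EuclideanSpace ℝ (Fin d)) (C : ℝ) (hC : 0 < C)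
    (hbij : Set.BijOn f E F)
    (hlip : ∀ x ∈ E, ∀ y ∈ E,
      C⁻¹ * dist x y ≤ dist (f x) (f y) ∧ dist (f x) (f y) ≤ C * dist x y)
    (s : ℝ) (hs : 0 < s)
    (hρs : ∑ j, ρ j ^ s = 1) (hτs : ∑ j, τ j ^ s = 1)
    -- `n₀` is such that the image of every cylinder admits a maximum decomposition
    (n₀ : ℕ)
    (hdecomp : ∀ w : List (Fin m), w ≠ [] →
      ∃ (k : List (Fin n)) (p : ℕ) (js : Fin p → List (Fin n)),
        IsMaxDecomp ψ F n₀ (f '' (wordMap φ w '' E)) k p js)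
    -- `E_{i₀}` is a stable cylinder for `f`
    (i₀ : List (Fin m)) (hi₀ : i₀ ≠ []) (c : ℝ) (hc : 0 < c)
    (hstable : ∀ j : List (Fin m),
      μH[s] (f '' (wordMap φ (i₀ ++ j) '' E))
        = ENNReal.ofReal c * μH[s] (wordMap φ (i₀ ++ j) '' E)) :
    Set.Finite {x : ENNReal |
      ∃ (i : List (Fin m)) (k : List (Fin n)) (p : ℕ) (js : Fin p → List (Fin n)) (r : Fin p),
        i ≠ [] ∧ IsMaxDecomp ψ F n₀ (f '' (wordMap φ (i₀ ++ i) '' E)) k p js ∧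
        x = μH[s] (wordMap φ (i₀ ++ i) '' E) / μH[s] (wordMap ψ (k ++ js r) '' F)} ∧
    Set.Finite {x : ℝ |
      ∃ (i : List (Fin m)) (k : List (Fin n)) (p : ℕ) (js : Fin p → List (Fin n)) (r : Fin p),
        i ≠ [] ∧ IsMaxDecomp ψ F n₀ (f '' (wordMap φ (i₀ ++ i) '' E)) k p js ∧
        x = Metric.diam (wordMap φ (i₀ ++ i) '' E) / Metric.diam (wordMap ψ (k ++ js r) '' F)} ∧
    Set.Finite {x : ℝ |
      ∃ (i : List (Fin m)) (k : List (Fin n)) (p : ℕ) (js : Fin p → List (Fin n)) (r : Fin p),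
        i ≠ [] ∧ IsMaxDecomp ψ F n₀ (f '' (wordMap φ (i₀ ++ i) '' E)) k p js ∧
        x = ((i₀ ++ i).map ρ).prod / ((k ++ js r).map τ).prod} := by
    classical
  obtain ⟨hρIoo, _⟩ := hρ
  obtain ⟨hτIoo, _⟩ := hτ
  -- positivity and finiteness of the Hausdorff measures and diameters
  have hHE0 : 0 < μH[s] E := hausdorff_pos d hd hρIoo hφ hEne hEcomp hEdef hEdisj hs hρs
  have hHEt : μH[s] E < ⊤ := hausdorff_lt_top hρIoo hφ hEne hEcomp hEdef hs hρs
  have hHF0 : 0 < μH[s] F := hausdorff_pos d hd hτIoo hψ hFne hFcomp hFdef hFdisj hs hτs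
  have hHFt : μH[s] F < ⊤ := hausdorff_lt_top hτIoo hψ hFne hFcomp hFdef hs hτs
  set he : ℝ := (μH[s] E).toReal with hhe
  set hfr : ℝ := (μH[s] F).toReal with hhf
  have hhe0 : 0 < he := ENNReal.toReal_pos hHE0.ne' hHEt.ne
  have hhf0 : 0 < hfr := ENNReal.toReal_pos hHF0.ne' hHFt.ne
  have hde0 : 0 < Metric.diam E := diam_pos hρIoo hEne hEcomp hEdef hEdisj hs hρs
  have hdf0 : 0 < Metric.diam F := diam_pos hτIoo hFne hFcomp hFdef hFdisj hs hτs
  set de : ℝ := Metric.diam E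
  set df : ℝ := Metric.diam F
  -- measure and diameter of cylinders
  have hmE : ∀ w : List (Fin m),
      μH[s] (wordMap φ w '' E) = ENNReal.ofReal (((w.map ρ).prod) ^ s) * μH[s] E :=
    fun w => sim_hausdorff_image (isSimilarity_wordMap hφ w) (prod_pos hρIoo w) hs.le E
  have hmF : ∀ w : List (Fin n),
      μH[s] (wordMap ψ w '' F) = ENNReal.ofReal (((w.map τ).prod) ^ s) * μH[s] F :=
    fun w => sim_hausdorff_image (isSimilarity_wordMap hψ w) (prod_pos hτIoo w) hs.le F
  have hdE : ∀ w : List (Fin m),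
      Metric.diam (wordMap φ w '' E) = ((w.map ρ).prod) * de :=
    fun w => sim_diam_image (isSimilarity_wordMap hφ w) (prod_pos hρIoo w) hEcomp.isBounded
  have hdF : ∀ w : List (Fin n),
      Metric.diam (wordMap ψ w '' F) = ((w.map τ).prod) * df :=
    fun w => sim_diam_image (isSimilarity_wordMap hψ w) (prod_pos hτIoo w) hFcomp.isBounded
  -- the word set and the two finite parameter sets
  set W : Set (List (Fin n)) := {w | w.length = n₀} with hW
  have hWfin : W.Finite := List.finite_length_eq (Fin n) n₀
  set SgSet : Set ℝ :=
    (fun S : Finset (List (Fin n)) => ∑ w ∈ S, ((w.map τ).prod) ^ s) ''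
      {S : Finset (List (Fin n)) | ↑S ⊆ W} with hSgSet
  set TSet : Set ℝ := (fun w : List (Fin n) => (w.map τ).prod) '' W with hTSet
  have hSgfin : SgSet.Finite := by
    apply Set.Finite.image
    have heq : {S : Finset (List (Fin n)) | ↑S ⊆ W}
        = (fun S : Finset (List (Fin n)) => (S : Set (List (Fin n)))) ⁻¹'
            {t : Set (List (Fin n)) | t ⊆ W} := rfl
    rw [heq]
    exact Set.Finite.preimage (Set.injOn_of_injective Finset.coe_injective)
      hWfin.finite_subsets
  have hTfin : TSet.Finite := hWfin.image _
  -- the central structural identity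
  have central : ∀ (i : List (Fin m)) (k : List (Fin n)) (p : ℕ)
      (js : Fin p → List (Fin n)) (r : Fin p),
      IsMaxDecomp ψ F n₀ (f '' (wordMap φ (i₀ ++ i) '' E)) k p js →
      ∃ S : Finset (List (Fin n)), (↑S : Set (List (Fin n))) ⊆ W ∧ (js r) ∈ W ∧
        c * ((((i₀ ++ i).map ρ).prod) ^ s * he)
          = (((k.map τ).prod) ^ s) * (∑ w ∈ S, ((w.map τ).prod) ^ s) * hfr := by
    intro i k p js r hMD
    obtain ⟨hsub, hmin, hlen, hdisj, hunion⟩ := hMD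
    have hjsinj : ∀ x ∈ (Finset.univ : Finset (Fin p)), ∀ y ∈ Finset.univ,
        js x = js y → x = y := by
      intro x _ y _ hxy
      by_contra hne'
      have hd : Disjoint (wordMap ψ (k ++ js x) '' F) (wordMap ψ (k ++ js y) '' F) :=
        hdisj hne'
      rw [hxy] at hd
      obtain ⟨z, hz⟩ := hFne.image (wordMap ψ (k ++ js y))
      exact hd.le_bot ⟨hz, hz⟩
    refine ⟨Finset.univ.image js, ?_, hlen r, ?_⟩
    · intro w hw
      rcases Finset.mem_image.1 (by exact_mod_cast hw) with ⟨r', _, rfl⟩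
      exact hlen r'
    -- the ENNReal measure identity
    have hμU : μH[s] (f '' (wordMap φ (i₀ ++ i) '' E))
        = ∑ r' : Fin p, μH[s] (wordMap ψ (k ++ js r') '' F) := by
      rw [hunion, measure_iUnion (fun a b hab => hdisj hab)
        (fun r' => ((hFcomp.image
          (sim_lipschitz (isSimilarity_wordMap hψ (k ++ js r'))
            (prod_pos hτIoo _).le).continuous).measurableSet)), tsum_fintype]
    have hkey : ENNReal.ofReal c * (ENNReal.ofReal ((((i₀ ++ i).map ρ).prod) ^ s) * μH[s] E)
        = ∑ r' : Fin p, ENNReal.ofReal ((((k ++ js r').map τ).prod) ^ s) * μH[s] F := by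
      rw [← hmE, ← hstable i, hμU]
      exact Finset.sum_congr rfl fun r' _ => hmF _
    -- pass to real numbers
    have hkeyR := congrArg ENNReal.toReal hkey
    rw [ENNReal.toReal_mul, ENNReal.toReal_mul, ENNReal.toReal_ofReal hc.le,
      ENNReal.toReal_ofReal (Real.rpow_nonneg (prod_pos hρIoo _).le s),
      ENNReal.toReal_sum (fun r' _ => ENNReal.mul_ne_top ENNReal.ofReal_ne_top hHFt.ne)]
        at hkeyR
    have hterm : ∀ r' : Fin p,
        (ENNReal.ofReal ((((k ++ js r').map τ).prod) ^ s) * μH[s] F).toReal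
          = (((k.map τ).prod) ^ s) * ((((js r').map τ).prod) ^ s) * hfr := by
      intro r'
      rw [ENNReal.toReal_mul, ENNReal.toReal_ofReal (Real.rpow_nonneg (prod_pos hτIoo _).le s)]
      rw [prod_append, Real.mul_rpow (prod_pos hτIoo k).le (prod_pos hτIoo (js r')).le]
    simp only [hterm] at hkeyR
    rw [← hhe] at hkeyR
    rw [Finset.sum_image hjsinj]
    rw [hkeyR, Finset.mul_sum, Finset.sum_mul]
  -- now the three finiteness claims
  refine ⟨?_, ?_, ?_⟩
  · -- M
    refine Set.Finite.subset (Set.Finite.image2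
      (fun sg t => ENNReal.ofReal (sg / (c * t ^ s))) hSgfin hTfin) ?_
    rintro x ⟨i, k, p, js, r, hine, hMD, rfl⟩
    obtain ⟨S, hSsub, hjsrW, hstar⟩ := central i k p js r hMD
    set Pp : ℝ := ((i₀ ++ i).map ρ).prod with hPpdef
    set tk : ℝ := (k.map τ).prod with htkdef
    set tr : ℝ := ((js r).map τ).prod with htrdef
    set sg : ℝ := ∑ w ∈ S, ((w.map τ).prod) ^ s with hsgdef
    have hPp0 : 0 < Pp := prod_pos hρIoo _
    have htk0 : 0 < tk := prod_pos hτIoo _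
    have htr0 : 0 < tr := prod_pos hτIoo _
    refine Set.mem_image2.2 ⟨sg, ⟨S, hSsub, rfl⟩, tr, ⟨js r, hjsrW, rfl⟩, ?_⟩
    -- compute the ENNReal ratio
    have ha : μH[s] (wordMap φ (i₀ ++ i) '' E) = ENNReal.ofReal (Pp ^ s) * μH[s] E := hmE _
    have hb : μH[s] (wordMap ψ (k ++ js r) '' F)
        = ENNReal.ofReal ((tk * tr) ^ s) * μH[s] F := by
      rw [hmF, prod_append]
    rw [ha, hb]
    have ha0 : ENNReal.ofReal (Pp ^ s) * μH[s] E ≠ 0 :=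
      mul_ne_zero (ENNReal.ofReal_pos.2 (Real.rpow_pos_of_pos hPp0 s)).ne' hHE0.ne'
    have haT : ENNReal.ofReal (Pp ^ s) * μH[s] E ≠ ⊤ :=
      ENNReal.mul_ne_top ENNReal.ofReal_ne_top hHEt.ne
    have hb0 : ENNReal.ofReal ((tk * tr) ^ s) * μH[s] F ≠ 0 :=
      mul_ne_zero (ENNReal.ofReal_pos.2 (Real.rpow_pos_of_pos (by positivity) s)).ne' hHF0.ne'
    have hbT : ENNReal.ofReal ((tk * tr) ^ s) * μH[s] F ≠ ⊤ :=
      ENNReal.mul_ne_top ENNReal.ofReal_ne_top hHFt.ne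
    have hxT : (ENNReal.ofReal (Pp ^ s) * μH[s] E) / (ENNReal.ofReal ((tk * tr) ^ s) * μH[s] F)
        ≠ ⊤ := by
      simp [ENNReal.div_eq_top, ha0, haT, hb0, hbT]
    rw [← ENNReal.ofReal_toReal hxT, ENNReal.toReal_div, ENNReal.toReal_mul,
      ENNReal.toReal_mul, ENNReal.toReal_ofReal (Real.rpow_nonneg hPp0.le s),
      ENNReal.toReal_ofReal (Real.rpow_nonneg (by positivity) s)]
    congr 1
    rw [Real.mul_rpow htk0.le htr0.le]
    rw [div_eq_div_iff (by positivity) (by positivity)]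
    linear_combination (-(tr ^ s)) * hstar
  · -- M'
    refine Set.Finite.subset (Set.Finite.image2
      (fun sg t => (sg * hfr / (c * he)) ^ s⁻¹ * de / (t * df)) hSgfin hTfin) ?_
    rintro x ⟨i, k, p, js, r, hine, hMD, rfl⟩
    obtain ⟨S, hSsub, hjsrW, hstar⟩ := central i k p js r hMD
    set Pp : ℝ := ((i₀ ++ i).map ρ).prod with hPpdef
    set tk : ℝ := (k.map τ).prod with htkdef
    set tr : ℝ := ((js r).map τ).prod with htrdef
    set sg : ℝ := ∑ w ∈ S, ((w.map τ).prod) ^ s with hsgdef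
    have hPp0 : 0 < Pp := prod_pos hρIoo _
    have htk0 : 0 < tk := prod_pos hτIoo _
    have htr0 : 0 < tr := prod_pos hτIoo _
    refine Set.mem_image2.2 ⟨sg, ⟨S, hSsub, rfl⟩, tr, ⟨js r, hjsrW, rfl⟩, ?_⟩
    have hPT : Pp / tk = (sg * hfr / (c * he)) ^ s⁻¹ := by
      have h1 : (Pp / tk) ^ s = sg * hfr / (c * he) := by
        rw [Real.div_rpow hPp0.le htk0.le]
        rw [div_eq_div_iff (by positivity) (by positivity)]
        linear_combination hstar
      rw [← h1, Real.rpow_rpow_inv (by positivity) hs.ne']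
    rw [hdE, hdF, prod_append k (js r)]
    rw [show ((i₀ ++ i).map ρ).prod = Pp from rfl,
      show (k.map τ).prod = tk from rfl, show ((js r).map τ).prod = tr from rfl]
    rw [← hPT]
    field_simp
  · -- M''
    refine Set.Finite.subset (Set.Finite.image2
      (fun sg t => (sg * hfr / (c * he)) ^ s⁻¹ / t) hSgfin hTfin) ?_
    rintro x ⟨i, k, p, js, r, hine, hMD, rfl⟩
    obtain ⟨S, hSsub, hjsrW, hstar⟩ := central i k p js r hMD
    set Pp : ℝ := ((i₀ ++ i).map ρ).prod with hPpdef
    set tk : ℝ := (k.map τ).prod with htkdef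
    set tr : ℝ := ((js r).map τ).prod with htrdef
    set sg : ℝ := ∑ w ∈ S, ((w.map τ).prod) ^ s with hsgdef
    have hPp0 : 0 < Pp := prod_pos hρIoo _
    have htk0 : 0 < tk := prod_pos hτIoo _
    have htr0 : 0 < tr := prod_pos hτIoo _
    refine Set.mem_image2.2 ⟨sg, ⟨S, hSsub, rfl⟩, tr, ⟨js r, hjsrW, rfl⟩, ?_⟩
    have hPT : Pp / tk = (sg * hfr / (c * he)) ^ s⁻¹ := by
      have h1 : (Pp / tk) ^ s = sg * hfr / (c * he) := by
        rw [Real.div_rpow hPp0.le htk0.le]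
        rw [div_eq_div_iff (by positivity) (by positivity)]
        linear_combination hstar
      rw [← h1, Real.rpow_rpow_inv (by positivity) hs.ne']
    rw [prod_append k (js r)]
    rw [show (k.map τ).prod = tk from rfl, show ((js r).map τ).prod = tr from rfl]
    rw [← hPT, div_div]
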